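/- Let γ≥2, μ>0 and let z, z':[0,∞)→ℂ be measurable with ‖z‖_{(γ)} < ∞ and ‖z'‖_{(γ)} < ∞. Let Θ and Θ' be asymptotic characteristics for z and z' respectively, with ‖Θ(t,ϑ,ω) − ϑ − ωt‖_{(γ−1)} < ∞ and ‖Θ'(t,ϑ,ω) − ϑ − ωt‖_{(γ−1)} < ∞, and define Γ(t,ϑ,ω) := ∫_t^∞ Im(e^{iΘ(s,ϑ,ω)} · conj(z(s))) ds and Γ'(t,ϑ,ω) := ∫_t^∞ Im(e^{iΘ'(s,ϑ,ω)} · conj(z'(s))) ds. There exists a constant C>0 depending only on γ such that if μC‖z'‖_{(γ)} < 1 then ‖Γ − Γ'‖_{(γ−1)} ≤ C‖z − z'‖_{(γ)} / (1 − μC‖z'‖_{(γ)}). -/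

import Mathlib

open MeasureTheory

noncomputable section

/-- The Japanese bracket `⟨t⟩ = (1+t²)^{1/2}`. -/
def jap (t : ℝ) : ℝ := Real.sqrt (1 + t ^ 2)

/-- Weighted sup-norm `sup_{t ≥ 0} |z t| ⟨t⟩^γ` for `z : ℝ → ℂ`. -/
def polyNormZ (γ : ℝ) (z : ℝ → ℂ) : ℝ :=
  ⨆ t : {t : ℝ // 0 ≤ t}, ‖z t.1‖ * jap t.1 ^ γ

/-- Finiteness of the weighted sup-norm for `z : ℝ → ℂ`. -/
def PolyBddZ (γ : ℝ) (z : ℝ → ℂ) : Prop :=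
  BddAbove (Set.range fun t : {t : ℝ // 0 ≤ t} => ‖z t.1‖ * jap t.1 ^ γ)

/-- Weighted sup-norm `sup_{t ≥ 0, ϑ, ω} |h t ϑ ω| ⟨t⟩^γ`. -/
def polyNormH (γ : ℝ) (h : ℝ → ℝ → ℝ → ℂ) : ℝ :=
  ⨆ p : {t : ℝ // 0 ≤ t} × ℝ × ℝ, ‖h p.1.1 p.2.1 p.2.2‖ * jap p.1.1 ^ γ

/-- Finiteness of the weighted sup-norm for `h`. -/
def PolyBddH (γ : ℝ) (h : ℝ → ℝ → ℝ → ℂ) : Prop :=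
  BddAbove (Set.range fun p : {t : ℝ // 0 ≤ t} × ℝ × ℝ =>
    ‖h p.1.1 p.2.1 p.2.2‖ * jap p.1.1 ^ γ)

/-- `Θ` is an asymptotic characteristic for the order parameter `z`, with coupling `μ`:
`Θ(t,ϑ,ω) = ϑ + ωt + μ ∫_t^∞ Im(e^{iΘ(s,ϑ,ω)} conj(z s)) ds` for all `t ≥ 0`. -/
def IsAsymChar (μ : ℝ) (z : ℝ → ℂ) (Θ : ℝ → ℝ → ℝ → ℝ) : Prop :=
  ∀ t : ℝ, 0 ≤ t → ∀ ϑ ω : ℝ,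
    Θ t ϑ ω = ϑ + ω * t + μ * ∫ s in Set.Ioi t,
      (Complex.exp (Complex.I * (Θ s ϑ ω : ℂ)) * (starRingEnd ℂ) (z s)).im

/-! ### Auxiliary lemmas -/

lemma measurable_integral_Ioi (f : ℝ → ℝ) :
    Measurable fun t : ℝ => ∫ s in Set.Ioi t, f s := by
  set F : ℝ → ℝ := fun t => ∫ s in Set.Ioi t, f s with hF
  set A : Set ℝ := {t | IntegrableOn f (Set.Ioi t)} with hA
  have hup : ∀ ⦃s t : ℝ⦄, s ∈ A → s ≤ t → t ∈ A := fun s t hs hst =>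
    hs.mono_set (Set.Ioi_subset_Ioi hst)
  have hzero : ∀ t ∉ A, F t = 0 := fun t ht => integral_undef ht
  have key : ∀ c ∈ A, Measurable ((Set.Ici c).indicator F) := by
    intro c hc
    set g : ℝ → ℝ := (Set.Ioi c).indicator f with hg
    have hgint : Integrable g := (integrable_indicator_iff measurableSet_Ioi).2 hc
    have hP : Continuous fun x => ∫ u in c..x, g u := hgint.continuous_primitive c
    have hFx : ∀ x, c ≤ x → F x = F c - ∫ u in c..x, g u := by
      intro x hx
      have h1 : Set.Ioc c x ∪ Set.Ioi x = Set.Ioi c := Set.Ioc_union_Ioi_eq_Ioi hx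
      have hIoc : IntegrableOn f (Set.Ioc c x) := hc.mono_set Set.Ioc_subset_Ioi_self
      have hIoi : IntegrableOn f (Set.Ioi x) := hup hc hx
      have hsplit := setIntegral_union (Set.Ioc_disjoint_Ioi le_rfl) measurableSet_Ioi hIoc hIoi
      rw [h1] at hsplit
      have h2 : ∫ u in c..x, g u = ∫ u in Set.Ioc c x, f u := by
        rw [intervalIntegral.integral_of_le hx]
        refine setIntegral_congr_fun measurableSet_Ioc fun u hu => ?_
        exact Set.indicator_of_mem (Set.Ioc_subset_Ioi_self hu) f
      rw [h2]
      simp only [hF]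
      linarith [hsplit]
    have hG : Continuous fun t : ℝ => F c - ∫ u in c..(max t c), g u :=
      continuous_const.sub (hP.comp (continuous_id.max continuous_const))
    have heq : (Set.Ici c).indicator F =
        (Set.Ici c).indicator (fun t => F c - ∫ u in c..(max t c), g u) := by
      funext t
      by_cases ht : t ∈ Set.Ici c
      · rw [Set.indicator_of_mem ht, Set.indicator_of_mem ht, hFx t ht, max_eq_left ht]
      · rw [Set.indicator_of_notMem ht, Set.indicator_of_notMem ht]
    rw [heq]
    exact hG.measurable.indicator measurableSet_Ici
  by_cases hne : A.Nonempty
  · obtain ⟨c, hcA, hconv⟩ :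
        ∃ c : ℕ → ℝ, (∀ n, c n ∈ A) ∧
          ∀ t : ℝ, ∀ᶠ n in Filter.atTop, (Set.Ici (c n)).indicator F t = F t := by
      by_cases hb : BddBelow A
      · by_cases ha : sInf A ∈ A
        · refine ⟨fun _ => sInf A, fun _ => ha, fun t => Filter.Eventually.of_forall fun n => ?_⟩
          by_cases ht : t ∈ Set.Ici (sInf A)
          · rw [Set.indicator_of_mem ht]
          · rw [Set.indicator_of_notMem ht,
              hzero t (fun hmem => ht (csInf_le hb hmem))]
        · have hIoiA : ∀ t, sInf A < t → t ∈ A := by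
            intro t ht
            obtain ⟨s, hsA, hst⟩ := (csInf_lt_iff hb hne).1 ht
            exact hup hsA hst.le
          refine ⟨fun n => sInf A + ((n : ℝ) + 1)⁻¹,
            fun n => hIoiA _ (lt_add_of_pos_right _ (by positivity)), fun t => ?_⟩
          by_cases ht : sInf A < t
          · have h0 : Filter.Tendsto (fun n : ℕ => ((n : ℝ) + 1)⁻¹)
                Filter.atTop (nhds 0) := by
              exact tendsto_one_div_add_atTop_nhds_zero_nat.congr fun n => one_div _
            have h1 : Filter.Tendsto (fun n : ℕ => sInf A + ((n : ℝ) + 1)⁻¹)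
                Filter.atTop (nhds (sInf A + 0)) := tendsto_const_nhds.add h0
            have h2 : ∀ᶠ n : ℕ in Filter.atTop, sInf A + ((n : ℝ) + 1)⁻¹ ≤ t :=
              h1.eventually_le_const (by simpa using ht)
            filter_upwards [h2] with n hn
            exact Set.indicator_of_mem hn F
          · push_neg at ht
            have htA : t ∉ A := by
              intro hmem
              rcases eq_or_lt_of_le (csInf_le hb hmem) with h | h
              · exact ha (h ▸ hmem)
              · exact absurd ht (not_le.2 h)
            refine Filter.Eventually.of_forall fun n => ?_
            rw [Set.indicator_of_notMem, hzero t htA]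
            intro hmem
            have : sInf A + ((n : ℝ) + 1)⁻¹ ≤ t := hmem
            nlinarith [inv_pos.2 (by positivity : (0:ℝ) < (n : ℝ) + 1)]
      · rw [not_bddBelow_iff] at hb
        have hsel : ∀ n : ℕ, ∃ x ∈ A, x < -(n : ℝ) := fun n => hb (-(n : ℝ))
        choose c hcA hclt using hsel
        refine ⟨c, hcA, fun t => ?_⟩
        rw [Filter.eventually_atTop]
        refine ⟨⌈-t⌉₊, fun n hn => ?_⟩
        have : c n ≤ t := by
          have h1 : -t ≤ (n : ℝ) := le_trans (Nat.le_ceil _) (by exact_mod_cast hn)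
          linarith [hclt n]
        exact Set.indicator_of_mem this F
    have : ∀ t, Filter.Tendsto (fun n => (Set.Ici (c n)).indicator F t)
        Filter.atTop (nhds (F t)) := fun t =>
      tendsto_const_nhds.congr' ((hconv t).mono fun n hn => hn.symm)
    exact measurable_of_tendsto_metrizable (fun n => key (c n) (hcA n))
      (tendsto_pi_nhds.2 this)
  · have hFz : F = fun _ => (0 : ℝ) := funext fun t => hzero t (fun h => hne ⟨t, h⟩)
    show Measurable fun t : ℝ => ∫ s in Set.Ioi t, f s
    rw [show (fun t : ℝ => ∫ s in Set.Ioi t, f s) = fun _ => (0 : ℝ) from hFz]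
    exact measurable_const

lemma jap_pos (t : ℝ) : 0 < jap t := Real.sqrt_pos.2 (by positivity)

lemma one_le_jap (t : ℝ) : 1 ≤ jap t :=
  Real.one_le_sqrt.2 (by nlinarith)

lemma jap_sq (t : ℝ) : jap t ^ 2 = 1 + t ^ 2 := Real.sq_sqrt (by positivity)

lemma self_le_jap (t : ℝ) (ht : 0 ≤ t) : t ≤ jap t := by
  nlinarith [jap_sq t, jap_pos t]

lemma jap_le_sqrt_two_mul {t : ℝ} (ht : 1 ≤ t) : jap t ≤ Real.sqrt 2 * t := by
  have ht0 : (0:ℝ) ≤ t := by linarith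
  calc jap t ≤ Real.sqrt (2 * t ^ 2) := Real.sqrt_le_sqrt (by nlinarith)
    _ = Real.sqrt 2 * t := by
        rw [Real.sqrt_mul (by norm_num) (t ^ 2), Real.sqrt_sq ht0]

lemma jap_le_sqrt_two {t : ℝ} (ht : t ≤ 1) (ht0 : 0 ≤ t) : jap t ≤ Real.sqrt 2 :=
  Real.sqrt_le_sqrt (by nlinarith)

lemma continuous_jap : Continuous jap := by
  apply Real.continuous_sqrt.comp
  continuity

lemma jap_rpow_nonneg (t γ : ℝ) : 0 ≤ jap t ^ γ := Real.rpow_nonneg (jap_pos t).le γ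

/-- The weight `⟨s⟩^(-γ)` is globally integrable when `γ ≥ 2`. -/
lemma integrable_jap_neg {γ : ℝ} (hγ : 2 ≤ γ) :
    Integrable (fun s : ℝ => jap s ^ (-γ)) := by
  apply integrable_inv_one_add_sq.mono'
  · exact (continuous_jap.rpow_const fun x => Or.inl (jap_pos x).ne').aestronglyMeasurable
  · refine Filter.Eventually.of_forall fun s => ?_
    rw [Real.norm_eq_abs, abs_of_nonneg (jap_rpow_nonneg s _)]
    have h1 : jap s ^ (-γ) ≤ jap s ^ (-(2:ℝ)) :=
      Real.rpow_le_rpow_of_exponent_le (one_le_jap s) (by linarith)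
    have h2 : jap s ^ (-(2:ℝ)) = (1 + s ^ 2)⁻¹ := by
      rw [Real.rpow_neg (jap_pos s).le, show ((2:ℝ)) = ((2:ℕ):ℝ) by norm_num,
        Real.rpow_natCast, jap_sq]
    linarith [h1, h2.le, h2.ge]

/-- Key integral estimate: `(∫_t^∞ ⟨s⟩^(-γ) ds) ⟨t⟩^(γ-1) ≤ 2 √2^(γ-1)` for `t ≥ 0`. -/
lemma integral_jap_le {γ : ℝ} (hγ : 2 ≤ γ) {t : ℝ} (ht : 0 ≤ t) :
    (∫ s in Set.Ioi t, jap s ^ (-γ)) * jap t ^ (γ - 1) ≤ 2 * Real.sqrt 2 ^ (γ - 1) := by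
  have hW := integrable_jap_neg hγ
  have hWpos : ∀ s : ℝ, 0 ≤ jap s ^ (-γ) := fun s => jap_rpow_nonneg s _
  have hk : (0:ℝ) < Real.sqrt 2 ^ (γ - 1) :=
    Real.rpow_pos_of_pos (Real.sqrt_pos.2 (by norm_num)) _
  have hIoi : ∀ a : ℝ, 1 ≤ a → (∫ s in Set.Ioi a, jap s ^ (-γ)) ≤ a ^ (1 - γ) := by
    intro a ha
    have ha0 : (0:ℝ) < a := by linarith
    have hmono : (∫ s in Set.Ioi a, jap s ^ (-γ)) ≤ ∫ s in Set.Ioi a, s ^ (-γ) := by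
      refine setIntegral_mono_on hW.integrableOn
        (integrableOn_Ioi_rpow_of_lt (by linarith) ha0) measurableSet_Ioi fun s hs => ?_
      have hs0 : (0:ℝ) < s := lt_trans ha0 hs
      exact Real.rpow_le_rpow_of_nonpos hs0 (self_le_jap s hs0.le) (by linarith)
    have heval : (∫ s in Set.Ioi a, s ^ (-γ)) = -a ^ (-γ + 1) / (-γ + 1) :=
      integral_Ioi_rpow_of_lt (by linarith) ha0
    have h3 : -a ^ (-γ + 1) / (-γ + 1) = a ^ (1 - γ) / (γ - 1) := by
      rw [show (-γ + 1 : ℝ) = 1 - γ by ring,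
        div_eq_div_iff (by linarith : (1 - γ : ℝ) ≠ 0) (by linarith : (γ - 1 : ℝ) ≠ 0)]
      ring
    have h4 : a ^ (1 - γ) / (γ - 1) ≤ a ^ (1 - γ) :=
      div_le_self (Real.rpow_nonneg ha0.le _) (by linarith)
    linarith [hmono, heval.le, heval.ge, h3.le, h3.ge]
  rcases le_or_gt 1 t with h1 | h1
  · have hI := hIoi t h1
    have ht0 : (0:ℝ) < t := by linarith
    have hj : jap t ^ (γ - 1) ≤ Real.sqrt 2 ^ (γ - 1) * t ^ (γ - 1) := by
      rw [← Real.mul_rpow (Real.sqrt_nonneg 2) ht0.le]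
      exact Real.rpow_le_rpow (jap_pos t).le (jap_le_sqrt_two_mul h1) (by linarith)
    have hprod : t ^ (1 - γ) * t ^ (γ - 1) = 1 := by
      rw [← Real.rpow_add ht0]; norm_num
    calc (∫ s in Set.Ioi t, jap s ^ (-γ)) * jap t ^ (γ - 1)
        ≤ t ^ (1 - γ) * (Real.sqrt 2 ^ (γ - 1) * t ^ (γ - 1)) := by
          apply mul_le_mul hI hj (jap_rpow_nonneg t _) (Real.rpow_nonneg ht0.le _)
      _ = Real.sqrt 2 ^ (γ - 1) * (t ^ (1 - γ) * t ^ (γ - 1)) := by ring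
      _ = Real.sqrt 2 ^ (γ - 1) := by rw [hprod, mul_one]
      _ ≤ 2 * Real.sqrt 2 ^ (γ - 1) := by linarith
  · have hsub : (∫ s in Set.Ioi t, jap s ^ (-γ)) ≤ ∫ s in Set.Ioi 0, jap s ^ (-γ) := by
      refine setIntegral_mono_set hW.integrableOn
        (Filter.Eventually.of_forall fun s => hWpos s) ?_
      exact HasSubset.Subset.eventuallyLE (Set.Ioi_subset_Ioi ht)
    have hsplit : (∫ s in Set.Ioi 0, jap s ^ (-γ)) =
        (∫ s in Set.Ioc (0:ℝ) 1, jap s ^ (-γ)) + ∫ s in Set.Ioi (1:ℝ), jap s ^ (-γ) := by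
      rw [← setIntegral_union (Set.Ioc_disjoint_Ioi le_rfl) measurableSet_Ioi
        hW.integrableOn hW.integrableOn, Set.Ioc_union_Ioi_eq_Ioi zero_le_one]
    have hIoc : (∫ s in Set.Ioc (0:ℝ) 1, jap s ^ (-γ)) ≤ 1 := by
      have : (∫ s in Set.Ioc (0:ℝ) 1, jap s ^ (-γ)) ≤ ∫ _ in Set.Ioc (0:ℝ) 1, (1:ℝ) :=
        setIntegral_mono_on hW.integrableOn (integrableOn_const measure_Ioc_lt_top.ne)
          measurableSet_Ioc fun s _ =>
            Real.rpow_le_one_of_one_le_of_nonpos (one_le_jap s) (by linarith)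
      simpa using this
    have hIoi1 : (∫ s in Set.Ioi (1:ℝ), jap s ^ (-γ)) ≤ 1 := by
      have := hIoi 1 le_rfl
      simpa [Real.one_rpow] using this
    have hj : jap t ^ (γ - 1) ≤ Real.sqrt 2 ^ (γ - 1) :=
      Real.rpow_le_rpow (jap_pos t).le (jap_le_sqrt_two h1.le ht) (by linarith)
    have hInn : (0:ℝ) ≤ ∫ s in Set.Ioi t, jap s ^ (-γ) :=
      setIntegral_nonneg measurableSet_Ioi fun s _ => hWpos s
    calc (∫ s in Set.Ioi t, jap s ^ (-γ)) * jap t ^ (γ - 1)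
        ≤ 2 * Real.sqrt 2 ^ (γ - 1) :=
          mul_le_mul (by linarith) hj (jap_rpow_nonneg t _) (by norm_num)

/-- `|e^{ia} - e^{ib}| ≤ |a - b|` for real `a b`. -/
lemma abs_exp_I_sub_exp_I (a b : ℝ) :
    ‖Complex.exp (Complex.I * a) - Complex.exp (Complex.I * b)‖ ≤ |a - b| := by
  have hder : ∀ x : ℝ, HasDerivAt (fun y : ℝ => Complex.exp (Complex.I * y))
      (Complex.I * Complex.exp (Complex.I * x)) x := by
    intro x
    have h1 : HasDerivAt (fun y : ℝ => (y : ℂ)) 1 x := Complex.ofRealCLM.hasDerivAt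
    have h2 : HasDerivAt (fun y : ℝ => Complex.I * (y : ℂ)) Complex.I x := by
      simpa using h1.const_mul Complex.I
    simpa [mul_comm] using h2.cexp
  have key := Convex.norm_image_sub_le_of_norm_hasDerivWithin_le
    (f := fun y : ℝ => Complex.exp (Complex.I * y))
    (f' := fun x : ℝ => Complex.I * Complex.exp (Complex.I * x)) (C := 1)
    (fun x _ => (hder x).hasDerivWithinAt)
    (fun x _ => by
      rw [norm_mul, Complex.norm_I, one_mul,
        Complex.norm_exp]
      simp)
    (convex_univ) (Set.mem_univ b) (Set.mem_univ a)
  simpa [Real.norm_eq_abs, Complex.dist_eq] using key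

lemma abs_exp_I_mul_ofReal (r : ℝ) :
    ‖Complex.exp (Complex.I * (r : ℂ))‖ = 1 := by
  rw [Complex.norm_exp]
  simp

/-- Pointwise bound from the weighted norm. -/
lemma polyBddZ_pointwise {γ : ℝ} {w : ℝ → ℂ} (hb : PolyBddZ γ w) {s : ℝ} (hs : 0 ≤ s) :
    ‖w s‖ ≤ polyNormZ γ w * jap s ^ (-γ) := by
  have h1 : ‖w s‖ * jap s ^ γ ≤ polyNormZ γ w :=
    le_ciSup hb (⟨s, hs⟩ : {t : ℝ // 0 ≤ t})
  have hpos : (0:ℝ) < jap s ^ γ := Real.rpow_pos_of_pos (jap_pos s) γ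
  rw [Real.rpow_neg (jap_pos s).le, ← div_eq_mul_inv, le_div_iff₀ hpos]
  exact h1

/-- Integrability of the interaction integrand for an asymptotic characteristic. -/
lemma integrableOn_char {γ μ : ℝ} (hγ : 2 ≤ γ) {w : ℝ → ℂ}
    (hw : Measurable w) (hb : PolyBddZ γ w) (Θ : ℝ → ℝ → ℝ → ℝ)
    (hΘ : IsAsymChar μ w Θ) (ϑ ω : ℝ) {t : ℝ} (ht : 0 ≤ t) :
    IntegrableOn
      (fun s => (Complex.exp (Complex.I * (Θ s ϑ ω : ℂ)) * (starRingEnd ℂ) (w s)).im)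
      (Set.Ioi t) := by
  set g : ℝ → ℝ :=
    fun s => (Complex.exp (Complex.I * (Θ s ϑ ω : ℂ)) * (starRingEnd ℂ) (w s)).im with hgdef
  set F : ℝ → ℝ := fun s => ∫ u in Set.Ioi s, g u with hFdef
  have hmF : Measurable F := measurable_integral_Ioi g
  set G : ℝ → ℝ := fun s =>
    (Complex.exp (Complex.I * ((ϑ + ω * s + μ * F s : ℝ) : ℂ)) * (starRingEnd ℂ) (w s)).im
    with hGdef
  have hmG : Measurable G := by
    apply Complex.measurable_im.comp
    apply Measurable.mul
    · apply Complex.measurable_exp.comp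
      exact (measurable_const.mul (Complex.measurable_ofReal.comp
        ((measurable_const.add (measurable_const.mul measurable_id)).add
          (measurable_const.mul hmF))))
    · exact Complex.continuous_conj.measurable.comp hw
  have hEq : Set.EqOn g G (Set.Ioi t) := by
    intro s hs
    have hs0 : (0:ℝ) ≤ s := le_trans ht (le_of_lt hs)
    have := hΘ s hs0 ϑ ω
    simp only [hgdef, hGdef]
    rw [this]
  have hGle : ∀ s ∈ Set.Ioi t, ‖G s‖ ≤ polyNormZ γ w * jap s ^ (-γ) := by
    intro s hs
    have hs0 : (0:ℝ) ≤ s := le_trans ht (le_of_lt hs)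
    rw [Real.norm_eq_abs]
    calc |(Complex.exp (Complex.I * ((ϑ + ω * s + μ * F s : ℝ) : ℂ)) *
            (starRingEnd ℂ) (w s)).im|
        ≤ ‖Complex.exp (Complex.I * ((ϑ + ω * s + μ * F s : ℝ) : ℂ)) *
            (starRingEnd ℂ) (w s)‖ := Complex.abs_im_le_norm _
      _ = ‖w s‖ := by
          rw [norm_mul, abs_exp_I_mul_ofReal, one_mul, Complex.norm_conj]
      _ ≤ polyNormZ γ w * jap s ^ (-γ) := polyBddZ_pointwise hb hs0
  have hGint : IntegrableOn G (Set.Ioi t) := by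
    refine Integrable.mono' (((integrable_jap_neg hγ).const_mul (polyNormZ γ w)).integrableOn)
      hmG.aestronglyMeasurable.restrict ?_
    rw [ae_restrict_iff' measurableSet_Ioi]
    exact Filter.Eventually.of_forall hGle
  exact hGint.congr_fun (fun s hs => (hEq hs).symm) measurableSet_Ioi

/-- Pointwise bound from the weighted norm (three-variable version). -/
lemma polyBddH_pointwise {γ : ℝ} {h : ℝ → ℝ → ℝ → ℂ} (hb : PolyBddH γ h) {t : ℝ}
    (ht : 0 ≤ t) (ϑ ω : ℝ) :
    ‖h t ϑ ω‖ * jap t ^ γ ≤ polyNormH γ h :=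
  le_ciSup hb (⟨⟨t, ht⟩, ϑ, ω⟩ : {t : ℝ // 0 ≤ t} × ℝ × ℝ)

/-- Estimate for the difference of the integrated interaction terms
(Lemma 6 of the paper). -/
theorem GammaDiff_bound_poly
    (γ : ℝ) (hγ : 2 ≤ γ) :
    ∃ C > (0 : ℝ), ∀ μ : ℝ, 0 < μ → ∀ z z' : ℝ → ℂ,
      Measurable z → Measurable z' → PolyBddZ γ z → PolyBddZ γ z' →
      ∀ Θ Θ' : ℝ → ℝ → ℝ → ℝ, IsAsymChar μ z Θ → IsAsymChar μ z' Θ' →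
        PolyBddH (γ - 1) (fun t ϑ ω => ((Θ t ϑ ω - ϑ - ω * t : ℝ) : ℂ)) →
        PolyBddH (γ - 1) (fun t ϑ ω => ((Θ' t ϑ ω - ϑ - ω * t : ℝ) : ℂ)) →
        μ * C * polyNormZ γ z' < 1 →
        polyNormH (γ - 1) (fun t ϑ ω =>
            (((∫ s in Set.Ioi t,
                (Complex.exp (Complex.I * (Θ s ϑ ω : ℂ)) * (starRingEnd ℂ) (z s)).im) -
              (∫ s in Set.Ioi t,
                (Complex.exp (Complex.I * (Θ' s ϑ ω : ℂ)) * (starRingEnd ℂ) (z' s)).im) :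
              ℝ) : ℂ)) ≤
          C * polyNormZ γ (fun t => z t - z' t) / (1 - μ * C * polyNormZ γ z') := by
  have hsq : (0:ℝ) < Real.sqrt 2 ^ (γ - 1) :=
    Real.rpow_pos_of_pos (Real.sqrt_pos.2 (by norm_num)) _
  refine ⟨2 * Real.sqrt 2 ^ (γ - 1), by linarith, ?_⟩
  intro μ hμ z z' hmz hmz' hbz hbz' Θ Θ' hΘ hΘ' hbΘ hbΘ' hsmall
  set C : ℝ := 2 * Real.sqrt 2 ^ (γ - 1) with hC
  set Nz' : ℝ := polyNormZ γ z' with hNz'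
  set Ndz : ℝ := polyNormZ γ (fun t => z t - z' t) with hNdz
  set M : ℝ := polyNormH (γ - 1) (fun t ϑ ω =>
    (((∫ s in Set.Ioi t,
        (Complex.exp (Complex.I * (Θ s ϑ ω : ℂ)) * (starRingEnd ℂ) (z s)).im) -
      (∫ s in Set.Ioi t,
        (Complex.exp (Complex.I * (Θ' s ϑ ω : ℂ)) * (starRingEnd ℂ) (z' s)).im) :
      ℝ) : ℂ)) with hM
  -- nonnegativity of the z'-norm
  have hNz'0 : 0 ≤ Nz' :=
    le_trans (mul_nonneg (norm_nonneg _) (jap_rpow_nonneg _ _))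
      (le_ciSup hbz' (⟨0, le_rfl⟩ : {t : ℝ // 0 ≤ t}))
  -- boundedness of z - z'
  have hbdz : PolyBddZ γ (fun t => z t - z' t) := by
    obtain ⟨b1, hb1⟩ := hbz
    obtain ⟨b2, hb2⟩ := hbz'
    refine ⟨b1 + b2, ?_⟩
    rintro x ⟨p, rfl⟩
    have h1 : ‖z p.1‖ * jap p.1 ^ γ ≤ b1 := hb1 ⟨p, rfl⟩
    have h2 : ‖z' p.1‖ * jap p.1 ^ γ ≤ b2 := hb2 ⟨p, rfl⟩
    have h3 : ‖z p.1 - z' p.1‖ ≤ ‖z p.1‖ + ‖z' p.1‖ := by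
      simpa using norm_sub_le (z p.1) (z' p.1)
    calc ‖z p.1 - z' p.1‖ * jap p.1 ^ γ
        ≤ (‖z p.1‖ + ‖z' p.1‖) * jap p.1 ^ γ :=
          mul_le_mul_of_nonneg_right h3 (jap_rpow_nonneg _ _)
      _ = ‖z p.1‖ * jap p.1 ^ γ + ‖z' p.1‖ * jap p.1 ^ γ := by ring
      _ ≤ b1 + b2 := add_le_add h1 h2
  have hNdz0 : 0 ≤ Ndz :=
    le_trans (mul_nonneg (norm_nonneg _) (jap_rpow_nonneg _ _))
      (le_ciSup hbdz (⟨0, le_rfl⟩ : {t : ℝ // 0 ≤ t}))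
  -- boundedness of the family defining M
  have hMbdd : BddAbove (Set.range fun p : {t : ℝ // 0 ≤ t} × ℝ × ℝ =>
      ‖(((∫ s in Set.Ioi p.1.1,
          (Complex.exp (Complex.I * (Θ s p.2.1 p.2.2 : ℂ)) * (starRingEnd ℂ) (z s)).im) -
        (∫ s in Set.Ioi p.1.1,
          (Complex.exp (Complex.I * (Θ' s p.2.1 p.2.2 : ℂ)) * (starRingEnd ℂ) (z' s)).im) :
        ℝ) : ℂ)‖ * jap p.1.1 ^ (γ - 1)) := by
    set P1 : ℝ := polyNormH (γ - 1) (fun t ϑ ω => ((Θ t ϑ ω - ϑ - ω * t : ℝ) : ℂ)) with hP1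
    set P2 : ℝ := polyNormH (γ - 1) (fun t ϑ ω => ((Θ' t ϑ ω - ϑ - ω * t : ℝ) : ℂ)) with hP2
    refine ⟨(P1 + P2) / μ, ?_⟩
    rintro x ⟨⟨⟨t, ht⟩, ϑ, ω⟩, rfl⟩
    have e1 : (∫ s in Set.Ioi t,
        (Complex.exp (Complex.I * (Θ s ϑ ω : ℂ)) * (starRingEnd ℂ) (z s)).im) =
        (Θ t ϑ ω - ϑ - ω * t) / μ := by
      rw [eq_div_iff hμ.ne']
      have := hΘ t ht ϑ ω
      linarith [this]
    have e2 : (∫ s in Set.Ioi t,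
        (Complex.exp (Complex.I * (Θ' s ϑ ω : ℂ)) * (starRingEnd ℂ) (z' s)).im) =
        (Θ' t ϑ ω - ϑ - ω * t) / μ := by
      rw [eq_div_iff hμ.ne']
      have := hΘ' t ht ϑ ω
      linarith [this]
    have hb1 : |Θ t ϑ ω - ϑ - ω * t| * jap t ^ (γ - 1) ≤ P1 := by
      have h := polyBddH_pointwise hbΘ ht ϑ ω
      rwa [Complex.norm_real, Real.norm_eq_abs] at h
    have hb2 : |Θ' t ϑ ω - ϑ - ω * t| * jap t ^ (γ - 1) ≤ P2 := by
      have h := polyBddH_pointwise hbΘ' ht ϑ ω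
      rwa [Complex.norm_real, Real.norm_eq_abs] at h
    simp only [Complex.norm_real, Real.norm_eq_abs]
    rw [e1, e2, div_sub_div_same, abs_div, abs_of_pos hμ, div_mul_eq_mul_div]
    rw [div_le_div_iff₀ hμ hμ]
    have htri : |Θ t ϑ ω - ϑ - ω * t - (Θ' t ϑ ω - ϑ - ω * t)|
        ≤ |Θ t ϑ ω - ϑ - ω * t| + |Θ' t ϑ ω - ϑ - ω * t| := abs_sub _ _
    have hjap := jap_rpow_nonneg t (γ - 1)
    nlinarith [mul_le_mul_of_nonneg_right htri hjap, hb1, hb2, hμ]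
  -- pointwise bound by M
  have hDle : ∀ (s : ℝ) (hs : 0 ≤ s) (ϑ ω : ℝ),
      |(∫ u in Set.Ioi s,
          (Complex.exp (Complex.I * (Θ u ϑ ω : ℂ)) * (starRingEnd ℂ) (z u)).im) -
        (∫ u in Set.Ioi s,
          (Complex.exp (Complex.I * (Θ' u ϑ ω : ℂ)) * (starRingEnd ℂ) (z' u)).im)| *
        jap s ^ (γ - 1) ≤ M := by
    intro s hs ϑ ω
    have h0 := le_ciSup hMbdd (⟨⟨s, hs⟩, ϑ, ω⟩ : {t : ℝ // 0 ≤ t} × ℝ × ℝ)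
    have h1 : (⨆ p : {t : ℝ // 0 ≤ t} × ℝ × ℝ,
        ‖(((∫ u in Set.Ioi p.1.1,
            (Complex.exp (Complex.I * (Θ u p.2.1 p.2.2 : ℂ)) * (starRingEnd ℂ) (z u)).im) -
          (∫ u in Set.Ioi p.1.1,
            (Complex.exp (Complex.I * (Θ' u p.2.1 p.2.2 : ℂ)) * (starRingEnd ℂ) (z' u)).im) :
          ℝ) : ℂ)‖ * jap p.1.1 ^ (γ - 1)) = M := by
      rw [hM]; rfl
    rw [h1] at h0
    simp only [Complex.norm_real, Real.norm_eq_abs] at h0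
    exact h0
  have hM0 : 0 ≤ M :=
    le_trans (mul_nonneg (abs_nonneg _) (jap_rpow_nonneg _ _)) (hDle 0 le_rfl 0 0)
  set K : ℝ := Ndz + μ * M * Nz' with hK
  have hK0 : 0 ≤ K :=
    add_nonneg hNdz0 (mul_nonneg (mul_nonneg hμ.le hM0) hNz'0)
  -- central pointwise estimate
  have key : ∀ (t : ℝ), 0 ≤ t → ∀ ϑ ω : ℝ,
      |(∫ s in Set.Ioi t,
          (Complex.exp (Complex.I * (Θ s ϑ ω : ℂ)) * (starRingEnd ℂ) (z s)).im) -
        (∫ s in Set.Ioi t,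
          (Complex.exp (Complex.I * (Θ' s ϑ ω : ℂ)) * (starRingEnd ℂ) (z' s)).im)| *
        jap t ^ (γ - 1) ≤ C * Ndz + μ * C * Nz' * M := by
    intro t ht ϑ ω
    have hint1 := integrableOn_char hγ hmz hbz Θ hΘ ϑ ω ht
    have hint2 := integrableOn_char hγ hmz' hbz' Θ' hΘ' ϑ ω ht
    have hsubint : (∫ s in Set.Ioi t,
          (Complex.exp (Complex.I * (Θ s ϑ ω : ℂ)) * (starRingEnd ℂ) (z s)).im) -
        (∫ s in Set.Ioi t,
          (Complex.exp (Complex.I * (Θ' s ϑ ω : ℂ)) * (starRingEnd ℂ) (z' s)).im) =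
        ∫ s in Set.Ioi t,
          ((Complex.exp (Complex.I * (Θ s ϑ ω : ℂ)) * (starRingEnd ℂ) (z s)).im -
           (Complex.exp (Complex.I * (Θ' s ϑ ω : ℂ)) * (starRingEnd ℂ) (z' s)).im) :=
      (integral_sub hint1 hint2).symm
    -- pointwise estimate of the integrand
    have hpw : ∀ s ∈ Set.Ioi t,
        ‖(Complex.exp (Complex.I * (Θ s ϑ ω : ℂ)) * (starRingEnd ℂ) (z s)).im -
          (Complex.exp (Complex.I * (Θ' s ϑ ω : ℂ)) * (starRingEnd ℂ) (z' s)).im‖ ≤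
        K * jap s ^ (-γ) := by
      intro s hs
      have hs0 : (0:ℝ) ≤ s := le_trans ht (le_of_lt hs)
      set e1 : ℂ := Complex.exp (Complex.I * (Θ s ϑ ω : ℂ)) with he1
      set e2 : ℂ := Complex.exp (Complex.I * (Θ' s ϑ ω : ℂ)) with he2
      have him : (e1 * (starRingEnd ℂ) (z s)).im - (e2 * (starRingEnd ℂ) (z' s)).im =
          (e1 * (starRingEnd ℂ) (z s) - e2 * (starRingEnd ℂ) (z' s)).im :=
        (Complex.sub_im _ _).symm
      rw [Real.norm_eq_abs, him]
      have hsplit : e1 * (starRingEnd ℂ) (z s) - e2 * (starRingEnd ℂ) (z' s) =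
          e1 * ((starRingEnd ℂ) (z s) - (starRingEnd ℂ) (z' s)) +
          (e1 - e2) * (starRingEnd ℂ) (z' s) := by ring
      have habs1 : ‖e1‖ *
          ‖(starRingEnd ℂ) (z s) - (starRingEnd ℂ) (z' s)‖ ≤
          Ndz * jap s ^ (-γ) := by
        rw [he1, abs_exp_I_mul_ofReal, one_mul, ← map_sub, Complex.norm_conj]
        exact polyBddZ_pointwise hbdz hs0
      have hzb' : ‖(starRingEnd ℂ) (z' s)‖ ≤ Nz' * jap s ^ (-γ) := by
        rw [Complex.norm_conj]
        exact polyBddZ_pointwise hbz' hs0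
      have hθdiff : Θ s ϑ ω - Θ' s ϑ ω = μ *
          ((∫ u in Set.Ioi s,
            (Complex.exp (Complex.I * (Θ u ϑ ω : ℂ)) * (starRingEnd ℂ) (z u)).im) -
          (∫ u in Set.Ioi s,
            (Complex.exp (Complex.I * (Θ' u ϑ ω : ℂ)) * (starRingEnd ℂ) (z' u)).im)) := by
        rw [hΘ s hs0 ϑ ω, hΘ' s hs0 ϑ ω]; ring
      have hE : ‖e1 - e2‖ ≤ μ * (M * jap s ^ (1 - γ)) := by
        have h4 : ‖e1 - e2‖ ≤ |Θ s ϑ ω - Θ' s ϑ ω| :=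
          abs_exp_I_sub_exp_I _ _
        have h5 := hDle s hs0 ϑ ω
        have hp : (0:ℝ) < jap s ^ (γ - 1) := Real.rpow_pos_of_pos (jap_pos s) _
        have h6 : |(∫ u in Set.Ioi s,
            (Complex.exp (Complex.I * (Θ u ϑ ω : ℂ)) * (starRingEnd ℂ) (z u)).im) -
          (∫ u in Set.Ioi s,
            (Complex.exp (Complex.I * (Θ' u ϑ ω : ℂ)) * (starRingEnd ℂ) (z' u)).im)| ≤
            M * jap s ^ (1 - γ) := by
          rw [show (1 - γ : ℝ) = -(γ - 1) by ring, Real.rpow_neg (jap_pos s).le,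
            ← div_eq_mul_inv, le_div_iff₀ hp]
          exact h5
        calc ‖e1 - e2‖ ≤ |Θ s ϑ ω - Θ' s ϑ ω| := h4
          _ = μ * |(∫ u in Set.Ioi s,
              (Complex.exp (Complex.I * (Θ u ϑ ω : ℂ)) * (starRingEnd ℂ) (z u)).im) -
            (∫ u in Set.Ioi s,
              (Complex.exp (Complex.I * (Θ' u ϑ ω : ℂ)) * (starRingEnd ℂ) (z' u)).im)| := by
              rw [hθdiff, abs_mul, abs_of_pos hμ]
          _ ≤ μ * (M * jap s ^ (1 - γ)) := by
              exact mul_le_mul_of_nonneg_left h6 hμ.le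
      have hjj : jap s ^ (1 - γ) * jap s ^ (-γ) ≤ jap s ^ (-γ) := by
        rw [← Real.rpow_add (jap_pos s)]
        exact Real.rpow_le_rpow_of_exponent_le (one_le_jap s) (by linarith)
      calc |(e1 * (starRingEnd ℂ) (z s) - e2 * (starRingEnd ℂ) (z' s)).im|
          ≤ ‖e1 * (starRingEnd ℂ) (z s) - e2 * (starRingEnd ℂ) (z' s)‖ :=
            Complex.abs_im_le_norm _
        _ = ‖e1 * ((starRingEnd ℂ) (z s) - (starRingEnd ℂ) (z' s)) +
            (e1 - e2) * (starRingEnd ℂ) (z' s)‖ := by rw [← hsplit]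
        _ ≤ ‖e1 * ((starRingEnd ℂ) (z s) - (starRingEnd ℂ) (z' s))‖ +
            ‖(e1 - e2) * (starRingEnd ℂ) (z' s)‖ := norm_add_le _ _
        _ = ‖e1‖ * ‖(starRingEnd ℂ) (z s) - (starRingEnd ℂ) (z' s)‖ +
            ‖e1 - e2‖ * ‖(starRingEnd ℂ) (z' s)‖ := by
            rw [norm_mul, norm_mul]
        _ ≤ Ndz * jap s ^ (-γ) +
            (μ * (M * jap s ^ (1 - γ))) * (Nz' * jap s ^ (-γ)) := by
            refine add_le_add habs1 (mul_le_mul hE hzb' (norm_nonneg _) ?_)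
            exact mul_nonneg hμ.le (mul_nonneg hM0 (jap_rpow_nonneg _ _))
        _ = Ndz * jap s ^ (-γ) +
            (μ * M * Nz') * (jap s ^ (1 - γ) * jap s ^ (-γ)) := by ring
        _ ≤ Ndz * jap s ^ (-γ) + (μ * M * Nz') * jap s ^ (-γ) := by
            refine add_le_add_right (mul_le_mul_of_nonneg_left hjj ?_) _
            exact mul_nonneg (mul_nonneg hμ.le hM0) hNz'0
        _ = K * jap s ^ (-γ) := by rw [hK]; ring
    -- integrate the pointwise bound
    have hWint : IntegrableOn (fun s => K * jap s ^ (-γ)) (Set.Ioi t) :=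
      ((integrable_jap_neg hγ).const_mul K).integrableOn
    have h8 : |∫ s in Set.Ioi t,
        ((Complex.exp (Complex.I * (Θ s ϑ ω : ℂ)) * (starRingEnd ℂ) (z s)).im -
         (Complex.exp (Complex.I * (Θ' s ϑ ω : ℂ)) * (starRingEnd ℂ) (z' s)).im)| ≤
        K * ∫ s in Set.Ioi t, jap s ^ (-γ) := by
      rw [← Real.norm_eq_abs]
      refine le_trans (norm_integral_le_integral_norm _) ?_
      rw [← integral_const_mul]
      exact setIntegral_mono_on ((hint1.sub hint2).norm) hWint measurableSet_Ioi hpw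
    have h9 : |(∫ s in Set.Ioi t,
          (Complex.exp (Complex.I * (Θ s ϑ ω : ℂ)) * (starRingEnd ℂ) (z s)).im) -
        (∫ s in Set.Ioi t,
          (Complex.exp (Complex.I * (Θ' s ϑ ω : ℂ)) * (starRingEnd ℂ) (z' s)).im)| ≤
        K * ∫ s in Set.Ioi t, jap s ^ (-γ) := by
      rw [hsubint]; exact h8
    calc |(∫ s in Set.Ioi t,
          (Complex.exp (Complex.I * (Θ s ϑ ω : ℂ)) * (starRingEnd ℂ) (z s)).im) -
        (∫ s in Set.Ioi t,
          (Complex.exp (Complex.I * (Θ' s ϑ ω : ℂ)) * (starRingEnd ℂ) (z' s)).im)| *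
        jap t ^ (γ - 1)
        ≤ (K * ∫ s in Set.Ioi t, jap s ^ (-γ)) * jap t ^ (γ - 1) :=
          mul_le_mul_of_nonneg_right h9 (jap_rpow_nonneg _ _)
      _ = K * ((∫ s in Set.Ioi t, jap s ^ (-γ)) * jap t ^ (γ - 1)) := by ring
      _ ≤ K * C := mul_le_mul_of_nonneg_left (integral_jap_le hγ ht) hK0
      _ = C * Ndz + μ * C * Nz' * M := by rw [hK]; ring
  -- conclusion
  have hM2 : M ≤ C * Ndz + μ * C * Nz' * M := by
    have h1 : polyNormH (γ - 1) (fun t ϑ ω =>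
        (((∫ s in Set.Ioi t,
            (Complex.exp (Complex.I * (Θ s ϑ ω : ℂ)) * (starRingEnd ℂ) (z s)).im) -
          (∫ s in Set.Ioi t,
            (Complex.exp (Complex.I * (Θ' s ϑ ω : ℂ)) * (starRingEnd ℂ) (z' s)).im) :
          ℝ) : ℂ)) ≤ C * Ndz + μ * C * Nz' * M := by
      refine ciSup_le fun p => ?_
      have h := key p.1.1 p.1.2 p.2.1 p.2.2
      simp only [Complex.norm_real, Real.norm_eq_abs]
      exact h
    rw [hM]
    exact h1
  have hden : 0 < 1 - μ * C * Nz' := by linarith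
  rw [le_div_iff₀ hden]
  nlinarith [hM2]

end
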